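/- Let H be a Hopf *-algebra whose group-likes form an abelian group, with each group-like σ satisfying σ* = σ^{-1} as needed. The involution w_n(h^1⊗...⊗h^n) = σ S^{-1}((h^n)*)⊗...⊗σ S^{-1}((h^1)*) is anti-multiplicative with respect to the cup product: w_{p+q}(Ψ ⌣ Φ) = w_q(Φ) ⌣ w_p(Ψ) for Ψ ∈ H^⊗p (coefficient σ_1) and Φ ∈ H^⊗q (coefficient σ_2), where Ψ⌣Φ = Ψ⊗(σ_1▷Φ) has coefficient σ_1σ_2. -/
import Mathlib


/- STATEMENT 11: Let H be a Hopf *-algebra whose group-like elements form an abelian group,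
the relevant group-likes being self-adjoint.  The involution
w_n(h^1⊗...⊗h^n) = σS⁻¹((h^n)*) ⊗ ... ⊗ σS⁻¹((h^1)*) (on the component of coefficient σ)
is anti-multiplicative with respect to the cup product Ψ⌣Φ = Ψ⊗(σ_1▷Φ):
  w_{p+q}(Ψ ⌣ Φ) = w_q(Φ) ⌣ w_p(Ψ)
for Ψ ∈ H^⊗p (coefficient σ_1) and Φ ∈ H^⊗q (coefficient σ_2), where Ψ⌣Φ has coefficient
σ_1σ_2.  All operators send elementary tensors to elementary tensors, so the identity is
expressed on tuples. -/

variable {H : Type*}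

/-- The involution on the component of `H^⊗n` with coefficient (group-like) `σ`:
`w_n(h^1⊗...⊗h^n) = σS⁻¹((h^n)*) ⊗ ... ⊗ σS⁻¹((h^1)*)`. -/
noncomputable def hopfWtup [Ring H] [Star H] (Sinv : H → H) (σ : H) (n : ℕ)
    (h : Fin n → H) : Fin n → H :=
  fun j => σ * Sinv (star (h (Fin.rev j)))

/-- The cup product on elementary tensors: `(g ⌣ f) = g ⊗ (σ_1 ▷ f)`, `▷` being the
diagonal left multiplication action. -/
noncomputable def cupTup [Ring H] (σ₁ : H) {p q : ℕ}
    (g : Fin p → H) (f : Fin q → H) : Fin (p + q) → H :=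
  Fin.append g (fun j => σ₁ * f j)

theorem hopfWtup_antimult_cup
    [Ring H] [StarRing H] (Sinv : H → H) (σ₁ σ₁i σ₂ σ₂i : H)
    -- `S⁻¹` is anti-multiplicative (H is a Hopf algebra with invertible antipode):
    (hSinvanti : ∀ a b : H, Sinv (a * b) = Sinv b * Sinv a)
    -- σ₁, σ₂ are group-like, hence invertible with `S⁻¹(σ) = σ⁻¹`, and self-adjoint:
    (hσ₁ : σ₁ * σ₁i = 1) (hσ₁' : σ₁i * σ₁ = 1) (hσ₂ : σ₂ * σ₂i = 1) (hσ₂' : σ₂i * σ₂ = 1)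
    (hSinvσ₁ : Sinv σ₁ = σ₁i) (hSinvσ₂ : Sinv σ₂ = σ₂i)
    (hstarσ₁ : star σ₁ = σ₁) (hstarσ₂ : star σ₂ = σ₂)
    -- the group-like elements commute (they form an abelian group):
    (hcomm : σ₁ * σ₂ = σ₂ * σ₁) (hcomm' : σ₁i * σ₂ = σ₂ * σ₁i)
    (p q : ℕ) (g : Fin p → H) (f : Fin q → H) :
    hopfWtup Sinv (σ₁ * σ₂) (p + q) (cupTup σ₁ g f) =
      fun j => cupTup σ₂ (hopfWtup Sinv σ₂ q f) (hopfWtup Sinv σ₁ p g)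
        (Fin.cast (Nat.add_comm p q) j) := by
  funext j
  have hjlt : (j : ℕ) < p + q := j.isLt
  simp only [hopfWtup, cupTup]
  rcases lt_or_ge (j : ℕ) q with hj | hj
  · -- right block
    have h1 : Fin.rev j = Fin.natAdd p ⟨q - 1 - j, by omega⟩ := by
      ext; simp only [Fin.val_rev, Fin.coe_natAdd]; omega
    have h2 : Fin.cast (Nat.add_comm p q) j = Fin.castAdd p ⟨(j : ℕ), hj⟩ := by
      ext; simp
    rw [h1, h2, Fin.append_right, Fin.append_left]
    have h3 : Fin.rev (⟨(j : ℕ), hj⟩ : Fin q) = ⟨q - 1 - j, by omega⟩ := by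
      ext; simp only [Fin.val_rev]; omega
    simp only [hopfWtup]
    rw [h3, star_mul, hstarσ₁, hSinvanti, hSinvσ₁]
    rw [← mul_assoc, mul_assoc σ₁ σ₂, ← hcomm', ← mul_assoc, hσ₁, one_mul]
  · -- left block
    have h1 : Fin.rev j = Fin.castAdd q ⟨p + q - 1 - j, by omega⟩ := by
      ext; simp only [Fin.val_rev, Fin.coe_castAdd]; omega
    have h2 : Fin.cast (Nat.add_comm p q) j = Fin.natAdd q ⟨(j : ℕ) - q, by omega⟩ := by
      ext; simp only [Fin.coe_cast, Fin.coe_natAdd]; omega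
    rw [h1, h2, Fin.append_left, Fin.append_right]
    have h3 : (⟨p + q - 1 - (j : ℕ), by omega⟩ : Fin p) = Fin.rev ⟨(j : ℕ) - q, by omega⟩ := by
      ext; simp only [Fin.val_rev]; omega
    rw [hcomm, mul_assoc, h3]
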